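/- Suppose u₁,…,u_m is a basis of V over E orthogonal with respect to Φ, and set d_j := Φ(u_j,u_j). Then for any ℚ-basis of V, the determinant of the Gram matrix of the bilinear form tr∘Φ with respect to that basis equals d_E^m · N_{E/ℚ}(d₁·d₂·⋯·d_m) · q² for some nonzero rational number q, where d_E denotes the discriminant of the number field E and N_{E/ℚ} its field norm. -/

import Mathlib

/-- `E` totally real, `Φ` a nondegenerate symmetric `E`-bilinear form on
the `m`-dimensional `E`-vector space `V`, `u₁,…,u_m` a `Φ`-orthogonal basis,
`d_j = Φ(u_j,u_j)`.  For any `ℚ`-basis of `V`, the determinant of the Gram matrix of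
`tr∘Φ` equals `d_E^m · N_{E/ℚ}(d₁⋯d_m) · q²` for some nonzero rational `q`, where
`d_E` is the discriminant of `E` and `N_{E/ℚ}` the field norm. -/
theorem stmt8 (E V : Type*) [Field E] [NumberField E]
    (htotreal : ∀ (σ : E →+* ℂ) (x : E), (σ x).im = 0)
    [AddCommGroup V] [Module E V] [Module ℚ V] [IsScalarTower ℚ E V]
    (Φ : V → V → E)
    (hΦadd1 : ∀ x x' y, Φ (x + x') y = Φ x y + Φ x' y)
    (hΦsmul1 : ∀ (e : E) (x y : V), Φ (e • x) y = e * Φ x y)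
    (hΦsymm : ∀ x y, Φ x y = Φ y x)
    (hΦnondeg : ∀ x, (∀ y, Φ x y = 0) → x = 0)
    (m : ℕ) (u : Module.Basis (Fin m) E V)
    (horth : ∀ i j : Fin m, i ≠ j → Φ (u i) (u j) = 0)
    (d : Fin m → E) (hd : ∀ j, d j = Φ (u j) (u j))
    (κ : Type) [Fintype κ] [DecidableEq κ] (b : Module.Basis κ ℚ V) :
    ∃ q : ℚ, q ≠ 0 ∧
      (Matrix.of fun i j : κ => Algebra.trace ℚ E (Φ (b i) (b j))).det =
        ((NumberField.discr E : ℚ)) ^ m * Algebra.norm ℚ (∏ j, d j) * q ^ 2 := by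
  classical
  -- Φ is ℚ-homogeneous
  have hsmulQ : ∀ (q : ℚ) (x y : V), Φ (q • x) y = algebraMap ℚ E q * Φ x y := by
    intro q x y
    rw [← IsScalarTower.algebraMap_smul E q x, hΦsmul1]
  -- the ℚ-bilinear form tr ∘ Φ
  set T : LinearMap.BilinForm ℚ V := LinearMap.mk₂ ℚ (fun x y => Algebra.trace ℚ E (Φ x y))
    (by intro x x' y
        show Algebra.trace ℚ E (Φ (x + x') y) = _
        rw [hΦadd1, map_add])
    (by intro q x y
        show Algebra.trace ℚ E (Φ (q • x) y) = q • Algebra.trace ℚ E (Φ x y)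
        rw [hsmulQ, ← Algebra.smul_def, map_smul])
    (by intro x y y'
        show Algebra.trace ℚ E (Φ x (y + y')) = _
        rw [hΦsymm, hΦadd1, hΦsymm y, hΦsymm y', map_add])
    (by intro q x y
        show Algebra.trace ℚ E (Φ x (q • y)) = q • Algebra.trace ℚ E (Φ x y)
        rw [hΦsymm, hsmulQ, ← Algebra.smul_def, map_smul, hΦsymm]) with hT
  have hTapp : ∀ x y, T x y = Algebra.trace ℚ E (Φ x y) := fun x y => rfl
  set ω := NumberField.integralBasis E with hω
  -- the ℚ-basis of V built from ω and u
  set c : Module.Basis (Module.Free.ChooseBasisIndex ℤ (NumberField.RingOfIntegers E) × Fin m) ℚ V :=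
    ω.smulTower u with hc
  -- blocks
  set M : Fin m → Matrix (Module.Free.ChooseBasisIndex ℤ (NumberField.RingOfIntegers E))
      (Module.Free.ChooseBasisIndex ℤ (NumberField.RingOfIntegers E)) ℚ :=
    fun j => Matrix.of fun i k => Algebra.trace ℚ E (d j * (ω i * ω k)) with hM
  have hblock : (LinearMap.BilinForm.toMatrix c T) = Matrix.blockDiagonal M := by
    ext ⟨i, j⟩ ⟨k, l⟩
    rw [BilinForm.toMatrix_apply]
    have hcv : ∀ (p : _ × Fin m), c p = ω p.1 • u p.2 := fun p => Module.Basis.smulTower_apply ω u p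
    rw [hcv, hcv]
    have heq : Φ (ω i • u j) (ω k • u l) = ω i * ω k * Φ (u j) (u l) := by
      rw [hΦsmul1, hΦsymm, hΦsmul1, hΦsymm (u l) (u j)]; ring
    rw [hTapp, heq, Matrix.blockDiagonal_apply]
    by_cases hjl : j = l
    · subst hjl
      simp only [if_pos rfl, hM, Matrix.of_apply, ← hd j]
      congr 1; ring
    · rw [horth j l hjl, mul_zero, map_zero, if_neg hjl]
  -- determinant of each block
  have hMdet : ∀ j, (M j).det = Algebra.norm ℚ (d j) * (NumberField.discr E : ℚ) := by
    intro j
    have hMeq : M j = (Algebra.leftMulMatrix ω (d j)).transpose * Algebra.traceMatrix ℚ ω := by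
      ext i k
      rw [Matrix.mul_apply, hM]
      simp only [Matrix.of_apply, Matrix.transpose_apply]
      have hrepr : d j * (ω i * ω k) = (∑ l, ω.repr (d j * ω i) l • ω l) * ω k := by
        rw [ω.sum_repr (d j * ω i)]; ring
      rw [hrepr, Finset.sum_mul, map_sum]
      refine Finset.sum_congr rfl fun l _ => ?_
      rw [smul_mul_assoc, map_smul, Algebra.leftMulMatrix_eq_repr_mul,
        Algebra.traceMatrix_apply, Algebra.traceForm_apply, smul_eq_mul]
    rw [hMeq, Matrix.det_mul, Matrix.det_transpose, ← Algebra.norm_eq_matrix_det,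
      ← Algebra.discr_def, ← NumberField.coe_discr]
  -- determinant of the Gram matrix in the basis c
  have hcdet : (LinearMap.BilinForm.toMatrix c T).det =
      (NumberField.discr E : ℚ) ^ m * Algebra.norm ℚ (∏ j, d j) := by
    rw [hblock, Matrix.det_blockDiagonal]
    rw [map_prod (Algebra.norm ℚ : E →* ℚ)]
    simp only [hMdet]
    rw [Finset.prod_mul_distrib, Finset.prod_const, Finset.card_univ, Fintype.card_fin]
    ring
  -- reindex c to κ
  have e : (Module.Free.ChooseBasisIndex ℤ (NumberField.RingOfIntegers E) × Fin m) ≃ κ :=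
    Module.Basis.indexEquiv c b
  set c' : Module.Basis κ ℚ V := c.reindex e with hc'
  have hc'det : (LinearMap.BilinForm.toMatrix c' T).det = (LinearMap.BilinForm.toMatrix c T).det := by
    have hre : LinearMap.BilinForm.toMatrix c' T = Matrix.reindex e e (LinearMap.BilinForm.toMatrix c T) := by
      ext i k
      rw [BilinForm.toMatrix_apply, Matrix.reindex_apply, Matrix.submatrix_apply,
        BilinForm.toMatrix_apply, hc', Module.Basis.reindex_apply, Module.Basis.reindex_apply]
    rw [hre, Matrix.det_reindex_self]
  -- change of basis
  set P : Matrix κ κ ℚ := c'.toMatrix b with hP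
  have hchange : P.transpose * LinearMap.BilinForm.toMatrix c' T * P = LinearMap.BilinForm.toMatrix b T :=
    BilinForm.toMatrix_mul_basis_toMatrix c' b T
  have hPdet : P.det ≠ 0 := by
    intro h
    have h1 : (b.toMatrix c' * c'.toMatrix b).det = 1 := by
      rw [Module.Basis.toMatrix_mul_toMatrix_flip, Matrix.det_one]
    rw [Matrix.det_mul, ← hP, h, mul_zero] at h1
    exact zero_ne_one h1
  refine ⟨P.det, hPdet, ?_⟩
  have hGram : (Matrix.of fun i j : κ => Algebra.trace ℚ E (Φ (b i) (b j))) =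
      LinearMap.BilinForm.toMatrix b T := by
    ext i j
    rw [BilinForm.toMatrix_apply, Matrix.of_apply, hTapp]
  rw [hGram, ← hchange, Matrix.det_mul, Matrix.det_mul, Matrix.det_transpose, hc'det, hcdet]
  ring
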